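/- Let s ≥ 2 and let G be a K_{s+1}-free simple graph on n vertices with G → (s, s)^v and χ(G) = 2s−1. If V(G) = I₁ ∪ … ∪ I_{2s−1} is a partition into independent sets and, for integers a, b with 2 ≤ a, b ≤ s, G' is the subgraph of G induced by the union of any a+b−1 of these independent sets, then G' → (a, b)^v. -/

import Mathlib

/-- `G → (a₁,…,a_r)ᵛ`: for every coloring of the vertices of `G` with `r` colors,
there is a color `i` and a clique of `G` on `a i` vertices all of whose vertices
receive color `i`. -/
def VArrows {V : Type*} {r : ℕ} (G : SimpleGraph V) (a : Fin r → ℕ) : Prop :=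
  ∀ c : V → Fin r, ∃ i : Fin r, ∃ t : Finset V,
    G.IsNClique (a i) t ∧ ∀ v ∈ t, c v = i

/-- Let `G` be a `K_{s+1}`-free graph with `G → (s,s)ᵛ` and `χ(G) = 2s-1`, and let
`V(G) = I₁ ∪ ⋯ ∪ I_{2s-1}` be a partition into independent sets. If `2 ≤ a, b ≤ s`
and `G'` is the subgraph of `G` induced by the union of any `a+b-1` of these
independent sets, then `G' → (a,b)ᵛ`. -/
theorem stmt_6 {V : Type*} [Fintype V] (s a b : ℕ) (hs : 2 ≤ s)
    (ha : 2 ≤ a) (has : a ≤ s) (hb : 2 ≤ b) (hbs : b ≤ s)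
    (G : SimpleGraph V)
    (hGfree : G.CliqueFree (s + 1)) (hGarr : VArrows G ![s, s])
    (hGchi : G.chromaticNumber = ((2 * s - 1 : ℕ) : ℕ∞))
    (I : Fin (2 * s - 1) → Set V)
    (hIindep : ∀ i, ∀ v ∈ I i, ∀ w ∈ I i, ¬ G.Adj v w)
    (hIdisj : ∀ i j, i ≠ j → Disjoint (I i) (I j))
    (hIcover : ⋃ i, I i = Set.univ)
    (S : Finset (Fin (2 * s - 1))) (hS : S.card = a + b - 1) :
    VArrows (G.induce (⋃ i ∈ S, I i)) ![a, b] := by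
  classical
  intro c
  by_contra hcon
  push_neg at hcon
  have hex : ∀ v : V, ∃ i, v ∈ I i := fun v => by
    have : v ∈ ⋃ i, I i := hIcover ▸ Set.mem_univ v
    exact Set.mem_iUnion.mp this
  choose f hf using hex
  have hmemU : ∀ v, f v ∈ S → v ∈ ⋃ i ∈ S, I i := fun v h =>
    Set.mem_biUnion h (hf v)
  -- cardinality of Sᶜ
  have hcompl : Sᶜ.card = 2 * s - a - b := by
    have h1 := Finset.card_compl S
    have h2 : Fintype.card (Fin (2 * s - 1)) = 2 * s - 1 := Fintype.card_fin _
    omega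
  obtain ⟨T, hTsub, hTcard⟩ : ∃ T ⊆ Sᶜ, T.card = s - a := by
    apply Finset.exists_subset_card_eq
    omega
  -- extended coloring
  let c2 : V → Fin 2 := fun v =>
    if h : f v ∈ S then c ⟨v, hmemU v h⟩ else if f v ∈ T then 0 else 1
  obtain ⟨i, t, htcl, htcol⟩ := hGarr c2
  have hts : G.IsNClique s t := by fin_cases i <;> simpa using htcl
  -- f is injective on t
  have hinj : Set.InjOn f ↑t := by
    intro v hv w hw hvw
    by_contra hne
    exact hIindep (f v) v (hf v) w (hvw ▸ hf w) (hts.isClique hv hw hne)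
  -- key lemma
  have key : ∀ (j : Fin 2) (k : ℕ) (W : Finset (Fin (2 * s - 1))),
      W.card ≤ s - k → k ≤ s →
      (∀ v ∈ t, f v ∉ S → f v ∈ W) → (∀ v ∈ t, f v ∈ S → c2 v = j) →
      ![a, b] j = k → False := by
    intro j k W hWcard hks hout hin hjk
    set tout := t.filter (fun v => f v ∉ S) with htout
    set tin := t.filter (fun v => f v ∈ S) with htin
    have houtcard : tout.card ≤ s - k := by
      refine le_trans (Finset.card_le_card_of_injOn f ?_ ?_) hWcard
      · intro v hv
        rw [htout, Finset.mem_coe, Finset.mem_filter] at hv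
        exact hout v hv.1 hv.2
      · exact hinj.mono (Finset.coe_subset.mpr (Finset.filter_subset _ t))
    have hsum : tin.card + tout.card = t.card :=
      Finset.card_filter_add_card_filter_not (p := fun v => f v ∈ S)
    have hincard : k ≤ tin.card := by
      have := hts.card_eq
      omega
    obtain ⟨t'', ht''sub, ht''card⟩ := Finset.exists_subset_card_eq hincard
    -- each vertex of t'' is in U
    have hmem : ∀ v ∈ t'', v ∈ ⋃ i ∈ S, I i := by
      intro v hv
      have := ht''sub hv
      rw [htin, Finset.mem_filter] at this
      exact hmemU v this.2
    -- lift to subtype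
    set tt : Finset ↑(⋃ i ∈ S, I i) := t''.subtype (· ∈ ⋃ i ∈ S, I i) with htt
    have httcard : tt.card = k := by
      rw [htt, Finset.card_subtype, Finset.filter_true_of_mem hmem, ht''card]
    have httmem : ∀ x : ↑(⋃ i ∈ S, I i), x ∈ tt → (x : V) ∈ t'' := by
      intro x hx
      rw [htt, Finset.mem_subtype] at hx
      exact hx
    have httcl : (G.induce (⋃ i ∈ S, I i)).IsNClique (![a, b] j) tt := by
      rw [hjk]
      constructor
      · intro x hx y hy hxy
        have hx' := httmem x (Finset.mem_coe.mp hx)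
        have hy' := httmem y (Finset.mem_coe.mp hy)
        have hxy' : (x : V) ≠ (y : V) := fun h => hxy (Subtype.ext h)
        have hx2 : (x : V) ∈ tin := ht''sub hx'
        have hy2 : (y : V) ∈ tin := ht''sub hy'
        rw [htin, Finset.mem_filter] at hx2 hy2
        exact hts.isClique (Finset.mem_coe.mpr hx2.1) (Finset.mem_coe.mpr hy2.1) hxy'
      · exact httcard
    obtain ⟨v, hvmem, hvcol⟩ := hcon j tt httcl
    apply hvcol
    have hv'' := httmem v hvmem
    have hvt := ht''sub hv''
    rw [htin, Finset.mem_filter] at hvt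
    have := hin (v : V) hvt.1 hvt.2
    rw [show c2 (v : V) = c ⟨(v : V), hmemU _ hvt.2⟩ from dif_pos hvt.2] at this
    have heq : (⟨(v : V), hmemU _ hvt.2⟩ : ↑(⋃ i ∈ S, I i)) = v := Subtype.ext rfl
    rwa [heq] at this
  fin_cases i
  · refine key 0 a T (by omega) has ?_ (fun v hv _ => htcol v hv) rfl
    intro v hv hvS
    have := htcol v hv
    simp only [c2, dif_neg hvS] at this
    by_contra hvT
    rw [if_neg hvT] at this
    exact one_ne_zero this
  · refine key 1 b (Sᶜ \ T) ?_ hbs ?_ (fun v hv _ => htcol v hv) rfl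
    · have : (Sᶜ \ T).card = Sᶜ.card - T.card := Finset.card_sdiff_of_subset hTsub
      omega
    · intro v hv hvS
      have := htcol v hv
      simp only [c2, dif_neg hvS] at this
      rw [Finset.mem_sdiff]
      refine ⟨Finset.mem_compl.mpr hvS, ?_⟩
      intro hvT
      rw [if_pos hvT] at this
      exact zero_ne_one this
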